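/- If p is a real polynomial such that p(A) is entrywise nonnegative for every entrywise nonnegative n-by-n real matrix A, then for each r in {0,...,n-1} and every real t ≥ 0, p_{(r,n)}(t) ≥ 0. -/

import Mathlib

open Polynomial Matrix

/-- `Pn n p` means the real polynomial `p` preserves entrywise nonnegativity of all
`n`-by-`n` nonnegative real matrices. -/
def Pn (n : ℕ) (p : Polynomial ℝ) : Prop :=
  ∀ A : Matrix (Fin n) (Fin n) ℝ, (∀ i j, 0 ≤ A i j) →
    ∀ i j, 0 ≤ ((Polynomial.aeval A) p) i j

/-- The `r mod n`-part of a real polynomial. -/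
noncomputable def rpart (p : Polynomial ℝ) (n r : ℕ) : Polynomial ℝ :=
  ∑ j ∈ Finset.range (p.natDegree + 1),
    if j % n = r then Polynomial.C (p.coeff j) * Polynomial.X ^ j else 0

open Fin.NatCast

theorem stmt_4 (n : ℕ) (p : Polynomial ℝ) (hp : Pn n p) (r : ℕ) (hr : r < n)
    (t : ℝ) (ht : 0 ≤ t) : 0 ≤ (rpart p n r).eval t := by
  have hn : 0 < n := lt_of_le_of_lt (Nat.zero_le r) hr
  haveI : NeZero n := ⟨hn.ne'⟩
  set A : Matrix (Fin n) (Fin n) ℝ :=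
    Matrix.circulant (fun d : Fin n => if d = -1 then t else 0) with hA
  have hpow : ∀ j : ℕ,
      A ^ j = Matrix.circulant (fun d : Fin n => if d = -(j : Fin n) then t ^ j else 0) := by
    intro j
    induction j with
    | zero =>
      simp only [pow_zero, Nat.cast_zero, neg_zero, pow_zero]
      rw [← Matrix.circulant_single_one]

      ext d
      by_cases h : d = 0 <;> simp [h, Pi.single_apply]
    | succ j ih =>
      rw [pow_succ, ih, hA, Matrix.circulant_mul]
      refine congrArg Matrix.circulant (funext fun d => ?_)
      simp only [Matrix.mulVec, Matrix.circulant_apply, dotProduct]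
      rw [Finset.sum_eq_single (-1 : Fin n)]
      · by_cases h : d = -((j : ℕ) + 1 : Fin n)
        · have h2 : d - -1 = -(j : Fin n) := by
            rw [h]; abel
          simp [h, h2, pow_succ]
        · have h2 : d - -1 ≠ -(j : Fin n) := by
            intro hc
            apply h
            have : d = -(j : Fin n) + -1 := by
              rw [← hc]; abel
            rw [this]; abel
          have h4 : ¬ d = -((j + 1 : ℕ) : Fin n) := by push_cast; exact h
          rw [if_neg h2, if_neg h4, zero_mul]
      · intro b _ hb; simp [hb]
      · simp
  have hAnn : ∀ i j, 0 ≤ A i j := by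
    intro i j
    rw [hA, Matrix.circulant_apply]
    split <;> simp [ht]
  have key := hp A hAnn 0 ⟨r, hr⟩
  rw [Polynomial.aeval_eq_sum_range] at key
  have hentry : (∑ j ∈ Finset.range (p.natDegree + 1), p.coeff j • A ^ j) 0 ⟨r, hr⟩
      = (rpart p n r).eval t := by
    rw [rpart, Polynomial.eval_finset_sum]
    rw [Matrix.sum_apply]
    refine Finset.sum_congr rfl ?_
    intro j _
    rw [Matrix.smul_apply, hpow j, Matrix.circulant_apply, smul_eq_mul]
    have hiff : ((0 : Fin n) - ⟨r, hr⟩ = -(j : Fin n)) ↔ j % n = r := by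
      rw [zero_sub, neg_inj]
      constructor
      · intro h
        have := congrArg Fin.val h.symm
        simpa [Fin.val_natCast, Nat.mod_eq_of_lt hr] using this
      · intro h
        apply Fin.ext
        simp [Fin.val_natCast, h, Nat.mod_eq_of_lt hr]
    by_cases h : j % n = r
    · rw [if_pos (hiff.mpr h), if_pos h]; simp
    · rw [if_neg (fun hc => h (hiff.mp hc)), if_neg h]; simp
  rwa [hentry] at key
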